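/- Let X_1, X_2, X_3 be independent uniform random points in a tetrahedron T of volume 1 and c the centroid of a facet of T. Then E[vol(conv{X_1,X_2,X_3,c})^2] = 1/2000. -/

import Mathlib

open MeasureTheory Set
set_option maxHeartbeats 2000000
noncomputable section





def S3 : Set (Fin 3 → ℝ) := {x | (∀ i, 0 ≤ x i) ∧ x 0 + x 1 + x 2 ≤ 1}

lemma S3_closed : IsClosed S3 := by
  have h1 : IsClosed {x : Fin 3 → ℝ | ∀ i, 0 ≤ x i} := by
    have : {x : Fin 3 → ℝ | ∀ i, 0 ≤ x i} = ⋂ i, {x | 0 ≤ x i} := by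
      ext x; simp
    rw [this]
    exact isClosed_iInter fun i => isClosed_le continuous_const (continuous_apply i)
  have h2 : IsClosed {x : Fin 3 → ℝ | x 0 + x 1 + x 2 ≤ 1} :=
    isClosed_le (by continuity) continuous_const
  exact h1.inter h2

lemma S3_meas : MeasurableSet S3 := S3_closed.measurableSet

lemma S3_compact : IsCompact S3 := by
  refine IsCompact.of_isClosed_subset (isCompact_Icc (a := (0 : Fin 3 → ℝ)) (b := 1)) S3_closed ?_
  rintro x ⟨h1, h2⟩
  constructor
  · intro i; exact h1 i
  · intro i
    have h0 : ∀ j, 0 ≤ x j := h1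
    fin_cases i
    · exact (by linarith [h0 0, h0 1, h0 2] : x 0 ≤ 1)
    · exact (by linarith [h0 0, h0 1, h0 2] : x 1 ≤ 1)
    · exact (by linarith [h0 0, h0 1, h0 2] : x 2 ≤ 1)

/-- the measurable equiv (Fin 3 → ℝ) ≃ ℝ × ℝ × ℝ -/
def eta : (Fin 3 → ℝ) ≃ᵐ ℝ × ℝ × ℝ :=
  (MeasurableEquiv.piFinSuccAbove (fun _ : Fin 3 => ℝ) 0).trans
    ((MeasurableEquiv.refl ℝ).prodCongr (MeasurableEquiv.finTwoArrow : (Fin 2 → ℝ) ≃ᵐ ℝ × ℝ))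

lemma eta_apply (x : Fin 3 → ℝ) : eta x = (x 0, x 1, x 2) := rfl

lemma eta_mp : MeasurePreserving eta volume volume := by
  have h1 := MeasureTheory.volume_preserving_piFinSuccAbove (fun _ : Fin 3 => ℝ) 0
  have h2 : MeasurePreserving ((MeasurableEquiv.refl ℝ).prodCongr (MeasurableEquiv.finTwoArrow : (Fin 2 → ℝ) ≃ᵐ ℝ × ℝ))
      volume volume := by
    have := (MeasurePreserving.id (volume : Measure ℝ)).prod
      (MeasureTheory.volume_preserving_finTwoArrow ℝ)
    simpa [MeasurableEquiv.prodCongr, Measure.volume_eq_prod] using this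
  exact h2.comp h1



def E2set (t : ℝ) : Set (ℝ × ℝ) := {q | 0 ≤ q.1 ∧ 0 ≤ q.2 ∧ q.1 + q.2 ≤ t}

lemma E2set_closed (t : ℝ) : IsClosed (E2set t) := by
  have h1 : IsClosed {q : ℝ × ℝ | 0 ≤ q.1} := isClosed_le continuous_const continuous_fst
  have h2 : IsClosed {q : ℝ × ℝ | 0 ≤ q.2} := isClosed_le continuous_const continuous_snd
  have h3 : IsClosed {q : ℝ × ℝ | q.1 + q.2 ≤ t} :=
    isClosed_le (continuous_fst.add continuous_snd) continuous_const
  exact (h1.inter (h2.inter h3))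

lemma E2set_meas (t : ℝ) : MeasurableSet (E2set t) := (E2set_closed t).measurableSet

lemma E2set_compact (t : ℝ) : IsCompact (E2set t) := by
  refine IsCompact.of_isClosed_subset ((isCompact_Icc (a := (0:ℝ)) (b := max t 0)).prod
    (isCompact_Icc (a := (0:ℝ)) (b := max t 0))) (E2set_closed t) ?_
  rintro ⟨y, z⟩ ⟨h1, h2, h3⟩
  simp only [Set.mem_prod, Set.mem_Icc]
  constructor
  · exact ⟨h1, le_max_of_le_left (by linarith)⟩
  · exact ⟨h2, le_max_of_le_left (by linarith)⟩

lemma slice2 (g : ℝ → ℝ → ℝ) (hg : Continuous fun q : ℝ × ℝ => g q.1 q.2) (t : ℝ) :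
    ∫ q in E2set t, g q.1 q.2 = ∫ y in Icc (0:ℝ) t, ∫ z in Icc (0:ℝ) (t - y), g y z := by
  have hInt : Integrable ((E2set t).indicator fun q => g q.1 q.2) volume :=
    ((hg.continuousOn).integrableOn_compact (E2set_compact t)).integrable_indicator
      (E2set_meas t)
  rw [← integral_indicator (E2set_meas t)]
  rw [Measure.volume_eq_prod] at hInt ⊢
  rw [integral_prod _ hInt]
  have h1 : ∀ y, (∫ z, (E2set t).indicator (fun q => g q.1 q.2) (y, z)) =
      (Ici (0:ℝ)).indicator (fun y => ∫ z in Icc (0:ℝ) (t - y), g y z) y := by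
    intro y
    by_cases hy : y ∈ Ici (0:ℝ)
    · rw [Set.indicator_of_mem hy]
      have hz : ∀ z, (E2set t).indicator (fun q => g q.1 q.2) (y, z) =
          (Icc (0:ℝ) (t - y)).indicator (fun z => g y z) z := by
        intro z
        by_cases hz : z ∈ Icc (0:ℝ) (t - y)
        · rw [Set.indicator_of_mem hz,
            Set.indicator_of_mem (show (y, z) ∈ E2set t from ⟨hy, hz.1, by linarith [hz.2]⟩)]
        · rw [Set.indicator_of_notMem hz, Set.indicator_of_notMem]
          intro hmem
          exact hz ⟨hmem.2.1, by linarith [hmem.2.2]⟩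
      simp only [hz]
      exact integral_indicator measurableSet_Icc
    · rw [Set.indicator_of_notMem hy]
      have hz : ∀ z, (E2set t).indicator (fun q => g q.1 q.2) (y, z) = 0 := by
        intro z
        exact Set.indicator_of_notMem (fun hmem => hy hmem.1) _
      simp only [hz, integral_zero]
  simp only [h1]
  rw [integral_indicator measurableSet_Ici]
  have h2 : EqOn (fun y => ∫ z in Icc (0:ℝ) (t - y), g y z)
      ((Icc (0:ℝ) t).indicator (fun y => ∫ z in Icc (0:ℝ) (t - y), g y z)) (Ici 0) := by
    intro y hy
    by_cases hyt : y ≤ t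
    · rw [Set.indicator_of_mem (show y ∈ Icc (0:ℝ) t from ⟨hy, hyt⟩)]
    · rw [Set.indicator_of_notMem (fun hmem => hyt hmem.2)]
      have he : Icc (0:ℝ) (t - y) = ∅ := Icc_eq_empty (by simp; linarith [lt_of_not_ge hyt])
      simp [he]
  rw [setIntegral_congr_fun measurableSet_Ici h2, integral_indicator measurableSet_Icc,
    Measure.restrict_restrict measurableSet_Icc,
    Set.inter_eq_self_of_subset_left (fun x hx => hx.1)]

def E3set : Set (ℝ × ℝ × ℝ) := {p | 0 ≤ p.1 ∧ 0 ≤ p.2.1 ∧ 0 ≤ p.2.2 ∧ p.1 + p.2.1 + p.2.2 ≤ 1}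

lemma E3set_closed : IsClosed E3set := by
  have h1 : IsClosed {p : ℝ × ℝ × ℝ | 0 ≤ p.1} := isClosed_le continuous_const continuous_fst
  have h2 : IsClosed {p : ℝ × ℝ × ℝ | 0 ≤ p.2.1} :=
    isClosed_le continuous_const (continuous_fst.comp continuous_snd)
  have h3 : IsClosed {p : ℝ × ℝ × ℝ | 0 ≤ p.2.2} :=
    isClosed_le continuous_const (continuous_snd.comp continuous_snd)
  have h4 : IsClosed {p : ℝ × ℝ × ℝ | p.1 + p.2.1 + p.2.2 ≤ 1} := by
    apply isClosed_le _ continuous_const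
    exact (continuous_fst.add (continuous_fst.comp continuous_snd)).add
      (continuous_snd.comp continuous_snd)
  exact h1.inter (h2.inter (h3.inter h4))

lemma E3set_meas : MeasurableSet E3set := E3set_closed.measurableSet

lemma E3set_compact : IsCompact E3set := by
  refine IsCompact.of_isClosed_subset ((isCompact_Icc (a := (0:ℝ)) (b := 1)).prod
    (((isCompact_Icc (a := (0:ℝ)) (b := 1)).prod (isCompact_Icc (a := (0:ℝ)) (b := 1)))))
    E3set_closed ?_
  rintro ⟨x, y, z⟩ ⟨h1, h2, h3, h4⟩
  simp only [Set.mem_prod, Set.mem_Icc]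
  exact ⟨⟨h1, by linarith⟩, ⟨h2, by linarith⟩, ⟨h3, by linarith⟩⟩

lemma setIntegral_S3 (f : ℝ → ℝ → ℝ → ℝ)
    (hf : Continuous fun p : ℝ × ℝ × ℝ => f p.1 p.2.1 p.2.2) :
    ∫ u in S3, f (u 0) (u 1) (u 2) =
      ∫ x in Icc (0:ℝ) 1, ∫ y in Icc (0:ℝ) (1 - x), ∫ z in Icc (0:ℝ) (1 - x - y), f x y z := by
  have step0 : eta ⁻¹' E3set = S3 := by
    ext x
    constructor
    · rintro ⟨h0, h1, h2, h3⟩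
      refine ⟨fun i => ?_, h3⟩
      fin_cases i
      · exact h0
      · exact h1
      · exact h2
    · rintro ⟨h, h3⟩
      exact ⟨h 0, h 1, h 2, h3⟩
  have step1 : ∫ u in S3, f (u 0) (u 1) (u 2) = ∫ p in E3set, f p.1 p.2.1 p.2.2 := by
    rw [← step0]
    exact eta_mp.setIntegral_preimage_emb (MeasurableEquiv.measurableEmbedding _)
      (fun p => f p.1 p.2.1 p.2.2) E3set
  rw [step1]
  have hInt : Integrable (E3set.indicator fun p => f p.1 p.2.1 p.2.2) volume :=
    ((hf.continuousOn).integrableOn_compact E3set_compact).integrable_indicator E3set_meas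
  rw [← integral_indicator E3set_meas]
  rw [Measure.volume_eq_prod] at hInt ⊢
  rw [integral_prod _ hInt]
  have h1 : ∀ x, (∫ q : ℝ × ℝ, E3set.indicator (fun p => f p.1 p.2.1 p.2.2) (x, q)) =
      (Ici (0:ℝ)).indicator (fun x => ∫ q in E2set (1 - x), f x q.1 q.2) x := by
    intro x
    by_cases hx : x ∈ Ici (0:ℝ)
    · rw [Set.indicator_of_mem hx]
      have hq : ∀ q : ℝ × ℝ, E3set.indicator (fun p => f p.1 p.2.1 p.2.2) (x, q) =
          (E2set (1 - x)).indicator (fun q => f x q.1 q.2) q := by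
        intro q
        by_cases hq : q ∈ E2set (1 - x)
        · rw [Set.indicator_of_mem hq, Set.indicator_of_mem
            (show ((x, q) : ℝ × ℝ × ℝ) ∈ E3set from ⟨hx, hq.1, hq.2.1, by linarith [hq.2.2]⟩)]
        · rw [Set.indicator_of_notMem hq, Set.indicator_of_notMem]
          intro hmem
          exact hq ⟨hmem.2.1, hmem.2.2.1, by linarith [hmem.2.2.2]⟩
      simp only [hq]
      exact integral_indicator (E2set_meas _)
    · rw [Set.indicator_of_notMem hx]
      have hq : ∀ q : ℝ × ℝ, E3set.indicator (fun p => f p.1 p.2.1 p.2.2) (x, q) = 0 := by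
        intro q
        exact Set.indicator_of_notMem (fun hmem => hx hmem.1) _
      simp only [hq, integral_zero]
  simp only [h1]
  rw [integral_indicator measurableSet_Ici]
  have h2 : ∀ x, (∫ q in E2set (1 - x), f x q.1 q.2) =
      ∫ y in Icc (0:ℝ) (1 - x), ∫ z in Icc (0:ℝ) (1 - x - y), f x y z := by
    intro x
    have hcont : Continuous fun q : ℝ × ℝ => f x q.1 q.2 :=
      hf.comp (Continuous.prodMk_right x)
    exact slice2 (fun y z => f x y z) hcont (1 - x)
  simp only [h2]
  have h3 : EqOn (fun x => ∫ y in Icc (0:ℝ) (1 - x), ∫ z in Icc (0:ℝ) (1 - x - y), f x y z)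
      ((Icc (0:ℝ) 1).indicator
        (fun x => ∫ y in Icc (0:ℝ) (1 - x), ∫ z in Icc (0:ℝ) (1 - x - y), f x y z)) (Ici 0) := by
    intro x hx
    by_cases hx1 : x ≤ 1
    · rw [Set.indicator_of_mem (show x ∈ Icc (0:ℝ) 1 from ⟨hx, hx1⟩)]
    · rw [Set.indicator_of_notMem (fun hmem => hx1 hmem.2)]
      have he : Icc (0:ℝ) (1 - x) = ∅ := Icc_eq_empty (by simp; linarith [lt_of_not_ge hx1])
      simp [he]
  rw [setIntegral_congr_fun measurableSet_Ici h3, integral_indicator measurableSet_Icc,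
    Measure.restrict_restrict measurableSet_Icc,
    Set.inter_eq_self_of_subset_left (fun x hx => hx.1)]



lemma icc_poly7 (c0 c1 c2 c3 c4 c5 c6 C : ℝ) (hC : 0 ≤ C) :
    ∫ z in Icc (0:ℝ) C, (c0 + c1 * z + c2 * z ^ 2 + c3 * z ^ 3 + c4 * z ^ 4 + c5 * z ^ 5
        + c6 * z ^ 6) =
      c0 * C + c1 / 2 * C ^ 2 + c2 / 3 * C ^ 3 + c3 / 4 * C ^ 4 + c4 / 5 * C ^ 5 + c5 / 6 * C ^ 6
        + c6 / 7 * C ^ 7 := by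
  rw [integral_Icc_eq_integral_Ioc, ← intervalIntegral.integral_of_le hC]
  have hd : ∀ t ∈ uIcc (0:ℝ) C,
      HasDerivAt (fun z : ℝ => c0 * z + c1 / 2 * z ^ 2 + c2 / 3 * z ^ 3 + c3 / 4 * z ^ 4
        + c4 / 5 * z ^ 5 + c5 / 6 * z ^ 6 + c6 / 7 * z ^ 7)
      (c0 + c1 * t + c2 * t ^ 2 + c3 * t ^ 3 + c4 * t ^ 4 + c5 * t ^ 5 + c6 * t ^ 6) t := by
    intro t _
    have h := ((((((((hasDerivAt_pow 1 t).const_mul c0).add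
      ((hasDerivAt_pow 2 t).const_mul (c1 / 2))).add
      ((hasDerivAt_pow 3 t).const_mul (c2 / 3))).add
      ((hasDerivAt_pow 4 t).const_mul (c3 / 4))).add
      ((hasDerivAt_pow 5 t).const_mul (c4 / 5))).add
      ((hasDerivAt_pow 6 t).const_mul (c5 / 6))).add
      ((hasDerivAt_pow 7 t).const_mul (c6 / 7)))
    convert h using 1
    · rfl
    · rfl
    · funext z; simp only [Pi.add_apply]; ring
    · push_cast; ring
  rw [intervalIntegral.integral_eq_sub_of_hasDerivAt hd (by apply Continuous.intervalIntegrable; continuity)]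
  ring

lemma master (k b0 b1 b2 c00 c11 c22 c01 c02 c12 : ℝ) :
    ∫ u in S3, (k + b0 * u 0 + b1 * u 1 + b2 * u 2 + c00 * u 0 ^ 2 + c11 * u 1 ^ 2
        + c22 * u 2 ^ 2 + c01 * (u 0 * u 1) + c02 * (u 0 * u 2) + c12 * (u 1 * u 2)) =
      k / 6 + (b0 + b1 + b2) / 24 + (c00 + c11 + c22) / 60 + (c01 + c02 + c12) / 120 := by
  have hres := setIntegral_S3 (fun x y z => k + b0 * x + b1 * y + b2 * z + c00 * x ^ 2
      + c11 * y ^ 2 + c22 * z ^ 2 + c01 * (x * y) + c02 * (x * z) + c12 * (y * z))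
      (by fun_prop)
  rw [hres]
  have hOuter : EqOn
      (fun x => ∫ y in Icc (0:ℝ) (1 - x), ∫ z in Icc (0:ℝ) (1 - x - y),
        (k + b0 * x + b1 * y + b2 * z + c00 * x ^ 2 + c11 * y ^ 2 + c22 * z ^ 2
          + c01 * (x * y) + c02 * (x * z) + c12 * (y * z)))
      (fun x => ((1/24)*c12 + (1/12)*c22 + (1/12)*c11 + (1/6)*b2 + (1/6)*b1 + (1/2)*k) + ((-1/6)*c12 + (1/6)*c02 + (1/6)*c01 + (-1/3)*c22 + (-1/3)*c11 + (-1/2)*b2 + (-1/2)*b1 + (1/2)*b0 + (-1)*k) * x + ((1/4)*c12 + (-1/2)*c02 + (-1/2)*c01 + (1/2)*c22 + (1/2)*c11 + (1/2)*c00 + (1/2)*b2 + (1/2)*b1 + (-1)*b0 + (1/2)*k) * x ^ 2 + ((-1/6)*c12 + (1/2)*c02 + (1/2)*c01 + (-1/3)*c22 + (-1/3)*c11 + (-1)*c00 + (-1/6)*b2 + (-1/6)*b1 + (1/2)*b0) * x ^ 3 + ((1/24)*c12 + (-1/6)*c02 + (-1/6)*c01 + (1/12)*c22 + (1/12)*c11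 + (1/2)*c00) * x ^ 4 + (0) * x ^ 5 + (0) * x ^ 6) (Icc 0 1) := by
    intro x hx
    have hMid : EqOn
        (fun y => ∫ z in Icc (0:ℝ) (1 - x - y),
          (k + b0 * x + b1 * y + b2 * z + c00 * x ^ 2 + c11 * y ^ 2 + c22 * z ^ 2
            + c01 * (x * y) + c02 * (x * z) + c12 * (y * z)))
        (fun y => ((1/2)*c02*x + (-1)*c02*x ^ 2 + (1/2)*c02*x ^ 3 + (1/3)*c22 + (-1)*c22*x + (1)*c22*x ^ 2 + (-1/3)*c22*x ^ 3 + (1)*c00*x ^ 2 + (-1)*c00*x ^ 3 + (1/2)*b2 + (-1)*b2*x + (1/2)*b2*x ^ 2 + (1)*b0*x + (-1)*b0*x ^ 2 + (1)*k + (-1)*k*x) + ((1/2)*c12 + (-1)*c12*x + (1/2)*c12*x ^ 2 + (-1)*c02*x + (1)*c02*x ^ 2 + (1)*c01*x + (-1)*c01*x ^ 2 + (-1)*c22 + (2)*c22*x + (-1)*c22*x ^ 2 + (-1)*c00*x ^ 2 + (-1)*b2 + (1)*b2*x + (1)*b1 + (-1)*b1*x + (-1)*b0*x + (-1)*k) *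 y + ((-1)*c12 + (1)*c12*x + (1/2)*c02*x + (-1)*c01*x + (1)*c22 + (-1)*c22*x + (1)*c11 + (-1)*c11*x + (1/2)*b2 + (-1)*b1) * y ^ 2 + ((1/2)*c12 + (-1/3)*c22 + (-1)*c11) * y ^ 3 + (0) * y ^ 4 + (0) * y ^ 5 + (0) * y ^ 6) (Icc 0 (1 - x)) := by
      intro y hy
      show (∫ z in Icc (0:ℝ) (1 - x - y),
          (k + b0 * x + b1 * y + b2 * z + c00 * x ^ 2 + c11 * y ^ 2 + c22 * z ^ 2
            + c01 * (x * y) + c02 * (x * z) + c12 * (y * z))) = _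
      have hrw : (fun z : ℝ => k + b0 * x + b1 * y + b2 * z + c00 * x ^ 2 + c11 * y ^ 2
            + c22 * z ^ 2 + c01 * (x * y) + c02 * (x * z) + c12 * (y * z))
          = (fun z : ℝ => (((1)*c01*x*y + (1)*c11*y ^ 2 + (1)*c00*x ^ 2 + (1)*b1*y + (1)*b0*x + (1)*k) + ((1)*c12*y + (1)*c02*x + (1)*b2) * z + ((1)*c22) * z ^ 2 + (0) * z ^ 3 + (0) * z ^ 4 + (0) * z ^ 5 + (0) * z ^ 6)) := by
        funext z; ring
      rw [hrw, icc_poly7 _ _ _ _ _ _ _ _ (by simp only [mem_Icc] at hy ⊢; linarith [hy.2])]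
      ring
    show (∫ y in Icc (0:ℝ) (1 - x), ∫ z in Icc (0:ℝ) (1 - x - y), _) = _
    rw [setIntegral_congr_fun measurableSet_Icc hMid,
      icc_poly7 _ _ _ _ _ _ _ _ (by simp only [mem_Icc] at hx ⊢; linarith [hx.2])]
    ring
  rw [setIntegral_congr_fun measurableSet_Icc hOuter,
    icc_poly7 _ _ _ _ _ _ _ _ (by norm_num : (0:ℝ) ≤ 1)]
  ring



def det3 (a b c : Fin 3 → ℝ) : ℝ :=
  a 0 * (b 1 * c 2 - b 2 * c 1) - a 1 * (b 0 * c 2 - b 2 * c 0) + a 2 * (b 0 * c 1 - b 1 * c 0)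

def sp (i : Fin 3) : Fin 3 → ℝ := Pi.single i 1

lemma range_fin4 {α : Type*} (f : Fin 4 → α) : Set.range f = {f 0, f 1, f 2, f 3} := by
  ext x
  constructor
  · rintro ⟨i, rfl⟩
    fin_cases i
    · exact Set.mem_insert _ _
    · exact Set.mem_insert_of_mem _ (Set.mem_insert _ _)
    · exact Set.mem_insert_of_mem _ (Set.mem_insert_of_mem _ (Set.mem_insert _ _))
    · exact Set.mem_insert_of_mem _ (Set.mem_insert_of_mem _ (Set.mem_insert_of_mem _ rfl))
  · rintro (rfl | rfl | rfl | rfl)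
    · exact ⟨0, rfl⟩
    · exact ⟨1, rfl⟩
    · exact ⟨2, rfl⟩
    · exact ⟨3, rfl⟩

lemma S3_convex : Convex ℝ S3 := by
  rintro x ⟨hx0, hx1⟩ y ⟨hy0, hy1⟩ a b ha hb hab
  constructor
  · intro i
    have : (a • x + b • y) i = a * x i + b * y i := by simp
    rw [this]
    have := mul_nonneg ha (hx0 i)
    have := mul_nonneg hb (hy0 i)
    linarith
  · have e : ∀ i, (a • x + b • y) i = a * x i + b * y i := by intro i; simp
    rw [e 0, e 1, e 2]
    nlinarith [mul_le_mul_of_nonneg_left hx1 ha, mul_le_mul_of_nonneg_left hy1 hb]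

lemma hull01 : convexHull ℝ ({0, sp 0, sp 1, sp 2} : Set (Fin 3 → ℝ)) = S3 := by
  apply Subset.antisymm
  · apply convexHull_min _ S3_convex
    rintro z (rfl | rfl | rfl | rfl)
    · exact ⟨fun i => le_refl 0, by norm_num⟩
    · refine ⟨fun i => ?_, ?_⟩
      · by_cases h : i = 0
        · subst h; simp [sp]
        · simp [sp, Pi.single_eq_of_ne h]
      · simp [sp, Pi.single_apply]
    · refine ⟨fun i => ?_, ?_⟩
      · by_cases h : i = 1
        · subst h; simp [sp]
        · simp [sp, Pi.single_eq_of_ne h]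
      · simp [sp, Pi.single_apply]
    · refine ⟨fun i => ?_, ?_⟩
      · by_cases h : i = 2
        · subst h; simp [sp]
        · simp [sp, Pi.single_eq_of_ne h]
      · simp [sp, Pi.single_apply]
  · rintro x ⟨hx0, hx1⟩
    have hmem : ∀ i : Fin 4, (![0, sp 0, sp 1, sp 2] i) ∈
        convexHull ℝ ({0, sp 0, sp 1, sp 2} : Set (Fin 3 → ℝ)) := by
      intro i
      apply subset_convexHull
      fin_cases i
      · exact Set.mem_insert _ _
      · exact Set.mem_insert_of_mem _ (Set.mem_insert _ _)
      · exact Set.mem_insert_of_mem _ (Set.mem_insert_of_mem _ (Set.mem_insert _ _))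
      · exact Set.mem_insert_of_mem _ (Set.mem_insert_of_mem _ (Set.mem_insert_of_mem _ rfl))
    have hx := (convex_convexHull ℝ ({0, sp 0, sp 1, sp 2} : Set (Fin 3 → ℝ))).sum_mem
      (t := Finset.univ) (w := ![1 - (x 0 + x 1 + x 2), x 0, x 1, x 2])
      (z := ![0, sp 0, sp 1, sp 2]) ?_ ?_ (fun i _ => hmem i)
    · convert hx using 1
      funext j
      rw [Fin.sum_univ_four]
      fin_cases j <;>
        simp [sp, Pi.single_apply] <;> ring
    · intro i _
      fin_cases i
      · simp; linarith
      · simpa using hx0 0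
      · simpa using hx0 1
      · simpa using hx0 2
    · rw [Fin.sum_univ_four]
      simp; ring


lemma volS3_toReal : (volume S3).toReal = 1 / 6 := by
  have h := master 1 0 0 0 0 0 0 0 0 0
  have h2 : ∫ u in S3, (1:ℝ) = 1 / 6 := by
    have e : (fun u : Fin 3 → ℝ => (1:ℝ)) = (fun u : Fin 3 → ℝ =>
        1 + 0 * u 0 + 0 * u 1 + 0 * u 2 + 0 * u 0 ^ 2 + 0 * u 1 ^ 2 + 0 * u 2 ^ 2
          + 0 * (u 0 * u 1) + 0 * (u 0 * u 2) + 0 * (u 1 * u 2)) := by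
      funext u; ring
    show (∫ u in S3, (fun u : Fin 3 → ℝ => (1:ℝ)) u) = 1 / 6
    rw [e, h]
    norm_num
  rw [setIntegral_const] at h2
  simpa [Measure.real] using h2

lemma volS3_ne_top : volume S3 ≠ ⊤ := by
  have hsub : S3 ⊆ Icc (0 : Fin 3 → ℝ) 1 := by
    rintro x ⟨h1, h2⟩
    constructor
    · intro i; exact h1 i
    · intro i
      fin_cases i
      · exact (by linarith [h1 0, h1 1, h1 2] : x 0 ≤ 1)
      · exact (by linarith [h1 0, h1 1, h1 2] : x 1 ≤ 1)
      · exact (by linarith [h1 0, h1 1, h1 2] : x 2 ≤ 1)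
  have : volume (Icc (0 : Fin 3 → ℝ) 1) = 1 := by
    rw [Real.volume_Icc_pi]
    norm_num
  exact ((measure_mono hsub).trans_lt (by rw [this]; exact ENNReal.one_lt_top)).ne

lemma volS3 : volume S3 = ENNReal.ofReal (1 / 6) := by
  rw [← volS3_toReal, ENNReal.ofReal_toReal volS3_ne_top]

/-- affine image of a convex hull -/
lemma aff_image_convexHull (p : Fin 3 → ℝ) (B : (Fin 3 → ℝ) →ₗ[ℝ] (Fin 3 → ℝ))
    (s : Set (Fin 3 → ℝ)) :
    (fun x => p + B x) '' (convexHull ℝ s) = convexHull ℝ ((fun x => p + B x) '' s) := by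
  let aff : (Fin 3 → ℝ) →ᵃ[ℝ] (Fin 3 → ℝ) :=
    { toFun := fun x => p + B x
      linear := B
      map_vadd' := by
        intro q w
        show p + B (w + q) = B w + (p + B q)
        rw [map_add]
        abel }
  exact AffineMap.image_convexHull aff s

lemma vol_aff (p : Fin 3 → ℝ) (B : (Fin 3 → ℝ) →ₗ[ℝ] (Fin 3 → ℝ)) (s : Set (Fin 3 → ℝ)) :
    volume ((fun x => p + B x) '' s) = ENNReal.ofReal |LinearMap.det B| * volume s := by
  have himg : (fun x => p + B x) '' s = (fun y => p + y) '' (B '' s) := by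
    rw [← Set.image_comp]
    rfl
  rw [himg]
  have htrans : volume ((fun y => p + y) '' (B '' s)) = volume (B '' s) := by
    have := measure_vadd (volume : Measure (Fin 3 → ℝ)) p (B '' s)
    simpa [Set.image_vadd] using this
  rw [htrans, Measure.addHaar_image_linearMap]

lemma sim_vol (p q r s : Fin 3 → ℝ) :
    volume (convexHull ℝ ({p, q, r, s} : Set (Fin 3 → ℝ))) =
      ENNReal.ofReal (|det3 (q - p) (r - p) (s - p)| / 6) := by
  set M : Matrix (Fin 3) (Fin 3) ℝ := Matrix.of fun i j => (![q - p, r - p, s - p] j) i with hM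
  set B := Matrix.toLin' M with hB
  have hBsp : ∀ j : Fin 3, B (sp j) = ![q - p, r - p, s - p] j := by
    intro j
    funext i
    show (Matrix.toLin' M) (Pi.single j 1) i = _
    rw [Matrix.toLin'_apply, Matrix.mulVec_single]
    simp [hM]
  have himg : (fun x => p + B x) '' ({0, sp 0, sp 1, sp 2} : Set (Fin 3 → ℝ)) = {p, q, r, s} := by
    rw [Set.image_insert_eq, Set.image_insert_eq, Set.image_insert_eq, Set.image_singleton]
    have e0 : p + B 0 = p := by rw [map_zero, add_zero]
    have e1 : p + B (sp 0) = q := by rw [hBsp 0]; funext i; simp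
    have e2 : p + B (sp 1) = r := by rw [hBsp 1]; funext i; simp
    have e3 : p + B (sp 2) = s := by rw [hBsp 2]; funext i; simp
    rw [e0, e1, e2, e3]
  have hdet : LinearMap.det B = det3 (q - p) (r - p) (s - p) := by
    rw [hB, LinearMap.det_toLin', Matrix.det_fin_three]
    simp only [hM, Matrix.of_apply, Matrix.cons_val', Matrix.cons_val_zero, Matrix.cons_val_one,
      Matrix.head_cons, Matrix.empty_val', Matrix.cons_val_fin_one, Matrix.head_fin_const,
      Matrix.cons_val_two, Matrix.tail_cons]
    rw [det3]
    ring
  rw [← himg, ← aff_image_convexHull, vol_aff, hull01, volS3, hdet,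
    ← ENNReal.ofReal_mul (abs_nonneg _)]
  congr 1
  ring


def c0v : Fin 3 → ℝ := fun _ => 1/3

lemma stage1 (u1 u2 : Fin 3 → ℝ) :
    (∫ u3 in S3, det3 (u2 - u1) (u3 - u1) (c0v - u1) ^ 2) = ((1/540)*u1 2 ^ 2 + (-1/540)*u1 1*u1 2 + (1/540)*u1 1 ^ 2 + (-1/540)*u1 0*u1 2 + (-1/540)*u1 0*u1 1 + (1/540)*u1 0 ^ 2) + ((1/540)*u1 2 + (-1/180)*u1 2 ^ 2 + (1/540)*u1 1 + (-1/180)*u1 1 ^ 2 + (-1/270)*u1 0 + (1/180)*u1 0*u1 2 + (1/180)*u1 0*u1 1) * u2 0 + ((1/540)*u1 2 + (-1/180)*u1 2 ^ 2 + (-1/270)*u1 1 + (1/180)*u1 1*u1 2 + (1/540)*u1 0 + (1/180)*u1 0*u1 1 + (-1/180)*u1 0 ^ 2) * u2 1 + ((-1/270)*u1 2 + (1/540)*u1 1 + (1/180)*u1 1*u1 2 + (-1/180)*u1 1 ^ 2 + (1/540)*u1 0 + (1/180)*u1 0*u1 2 + (-1/180)*u1 0 ^ 2) * u2 2 + ((1/540)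 + (-1/180)*u1 2 + (1/135)*u1 2 ^ 2 + (-1/180)*u1 1 + (1/540)*u1 1*u1 2 + (1/135)*u1 1 ^ 2) * u2 0 ^ 2 + ((1/540) + (-1/180)*u1 2 + (1/135)*u1 2 ^ 2 + (-1/180)*u1 0 + (1/540)*u1 0*u1 2 + (1/135)*u1 0 ^ 2) * u2 1 ^ 2 + ((1/540) + (-1/180)*u1 1 + (1/135)*u1 1 ^ 2 + (-1/180)*u1 0 + (1/540)*u1 0*u1 1 + (1/135)*u1 0 ^ 2) * u2 2 ^ 2 + ((-1/540) + (1/540)*u1 2 ^ 2 + (1/180)*u1 1 + (-1/540)*u1 1*u1 2 + (1/180)*u1 0 + (-1/540)*u1 0*u1 2 + (-2/135)*u1 0*u1 1) * (u2 0 * u2 1) + ((-1/540) + (1/180)*u1 2 + (-1/540)*u1 1*u1 2 + (1/540)*u1 1 ^ 2 + (1/180)*u1 0 + (-2/135)*u1 0*u1 2 + (-1/540)*u1 0*u1 1) * (u2 0 * u2 2) + ((-1/540) + (1/180)*u1 2 + (1/180)*u1 1 + (-2/135)*u1 1*u1 2 + (-1/540)*u1 0*u1 2 + (-1/540)*u1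 0*u1 1 + (1/540)*u1 0 ^ 2) * (u2 1 * u2 2) := by
  have e : (fun u3 : Fin 3 → ℝ => det3 (u2 - u1) (u3 - u1) (c0v - u1) ^ 2)
      = (fun u3 : Fin 3 → ℝ => ((1/9)*u1 2 ^ 2*u2 1 ^ 2 + (-2/9)*u1 2 ^ 2*u2 0*u2 1 + (1/9)*u1 2 ^ 2*u2 0 ^ 2 + (-2/9)*u1 1*u1 2*u2 1*u2 2 + (2/9)*u1 1*u1 2*u2 0*u2 2 + (2/9)*u1 1*u1 2*u2 0*u2 1 + (-2/9)*u1 1*u1 2*u2 0 ^ 2 + (1/9)*u1 1 ^ 2*u2 2 ^ 2 + (-2/9)*u1 1 ^ 2*u2 0*u2 2 + (1/9)*u1 1 ^ 2*u2 0 ^ 2 + (2/9)*u1 0*u1 2*u2 1*u2 2 + (-2/9)*u1 0*u1 2*u2 1 ^ 2 + (-2/9)*u1 0*u1 2*u2 0*u2 2 + (2/9)*u1 0*u1 2*u2 0*u2 1 + (-2/9)*u1 0*u1 1*u2 2 ^ 2 + (2/9)*u1 0*u1 1*u2 1*u2 2 + (2/9)*u1 0*u1 1*u2 0*u2 2 +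 (-2/9)*u1 0*u1 1*u2 0*u2 1 + (1/9)*u1 0 ^ 2*u2 2 ^ 2 + (-2/9)*u1 0 ^ 2*u2 1*u2 2 + (1/9)*u1 0 ^ 2*u2 1 ^ 2) + ((-2/9)*u1 2*u2 1*u2 2 + (2/9)*u1 2*u2 1 ^ 2 + (2/9)*u1 2*u2 0*u2 2 + (-2/9)*u1 2*u2 0*u2 1 + (2/9)*u1 2 ^ 2*u2 1 + (-2/3)*u1 2 ^ 2*u2 1 ^ 2 + (-2/9)*u1 2 ^ 2*u2 0 + (2/3)*u1 2 ^ 2*u2 0*u2 1 + (2/9)*u1 1*u2 2 ^ 2 + (-2/9)*u1 1*u2 1*u2 2 + (-2/9)*u1 1*u2 0*u2 2 + (2/9)*u1 1*u2 0*u2 1 + (-2/9)*u1 1*u1 2*u2 2 + (-2/9)*u1 1*u1 2*u2 1 + (4/3)*u1 1*u1 2*u2 1*u2 2 + (4/9)*u1 1*u1 2*u2 0 + (-2/3)*u1 1*u1 2*u2 0*u2 2 + (-2/3)*u1 1*u1 2*u2 0*u2 1 + (2/9)*u1 1 ^ 2*u2 2 + (-2/3)*u1 1 ^ 2*u2 2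 ^ 2 + (-2/9)*u1 1 ^ 2*u2 0 + (2/3)*u1 1 ^ 2*u2 0*u2 2 + (-2/9)*u1 0*u2 2 ^ 2 + (4/9)*u1 0*u2 1*u2 2 + (-2/9)*u1 0*u2 1 ^ 2 + (2/9)*u1 0*u1 2*u2 2 + (-2/9)*u1 0*u1 2*u2 1 + (-2/3)*u1 0*u1 2*u2 1*u2 2 + (2/3)*u1 0*u1 2*u2 1 ^ 2 + (-2/9)*u1 0*u1 1*u2 2 + (2/3)*u1 0*u1 1*u2 2 ^ 2 + (2/9)*u1 0*u1 1*u2 1 + (-2/3)*u1 0*u1 1*u2 1*u2 2) * u3 0 + ((2/9)*u1 2*u2 1*u2 2 + (-2/9)*u1 2*u2 0*u2 2 + (-2/9)*u1 2*u2 0*u2 1 + (2/9)*u1 2*u2 0 ^ 2 + (-2/9)*u1 2 ^ 2*u2 1 + (2/9)*u1 2 ^ 2*u2 0 + (2/3)*u1 2 ^ 2*u2 0*u2 1 + (-2/3)*u1 2 ^ 2*u2 0 ^ 2 + (-2/9)*u1 1*u2 2 ^ 2 + (4/9)*u1 1*u2 0*u2 2 + (-2/9)*u1 1*u2 0 ^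 2 + (2/9)*u1 1*u1 2*u2 2 + (-2/9)*u1 1*u1 2*u2 0 + (-2/3)*u1 1*u1 2*u2 0*u2 2 + (2/3)*u1 1*u1 2*u2 0 ^ 2 + (2/9)*u1 0*u2 2 ^ 2 + (-2/9)*u1 0*u2 1*u2 2 + (-2/9)*u1 0*u2 0*u2 2 + (2/9)*u1 0*u2 0*u2 1 + (-2/9)*u1 0*u1 2*u2 2 + (4/9)*u1 0*u1 2*u2 1 + (-2/3)*u1 0*u1 2*u2 1*u2 2 + (-2/9)*u1 0*u1 2*u2 0 + (4/3)*u1 0*u1 2*u2 0*u2 2 + (-2/3)*u1 0*u1 2*u2 0*u2 1 + (-2/9)*u1 0*u1 1*u2 2 + (2/3)*u1 0*u1 1*u2 2 ^ 2 + (2/9)*u1 0*u1 1*u2 0 + (-2/3)*u1 0*u1 1*u2 0*u2 2 + (2/9)*u1 0 ^ 2*u2 2 + (-2/3)*u1 0 ^ 2*u2 2 ^ 2 + (-2/9)*u1 0 ^ 2*u2 1 + (2/3)*u1 0 ^ 2*u2 1*u2 2) * u3 1 + ((-2/9)*u1 2*u2 1 ^ 2 + (4/9)*u1 2*u2 0*u2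 1 + (-2/9)*u1 2*u2 0 ^ 2 + (2/9)*u1 1*u2 1*u2 2 + (-2/9)*u1 1*u2 0*u2 2 + (-2/9)*u1 1*u2 0*u2 1 + (2/9)*u1 1*u2 0 ^ 2 + (2/9)*u1 1*u1 2*u2 1 + (-2/9)*u1 1*u1 2*u2 0 + (-2/3)*u1 1*u1 2*u2 0*u2 1 + (2/3)*u1 1*u1 2*u2 0 ^ 2 + (-2/9)*u1 1 ^ 2*u2 2 + (2/9)*u1 1 ^ 2*u2 0 + (2/3)*u1 1 ^ 2*u2 0*u2 2 + (-2/3)*u1 1 ^ 2*u2 0 ^ 2 + (-2/9)*u1 0*u2 1*u2 2 + (2/9)*u1 0*u2 1 ^ 2 + (2/9)*u1 0*u2 0*u2 2 + (-2/9)*u1 0*u2 0*u2 1 + (-2/9)*u1 0*u1 2*u2 1 + (2/3)*u1 0*u1 2*u2 1 ^ 2 + (2/9)*u1 0*u1 2*u2 0 + (-2/3)*u1 0*u1 2*u2 0*u2 1 + (4/9)*u1 0*u1 1*u2 2 + (-2/9)*u1 0*u1 1*u2 1 + (-2/3)*u1 0*u1 1*u2 1*u2 2 + (-2/9)*u1 0*u1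 1*u2 0 + (-2/3)*u1 0*u1 1*u2 0*u2 2 + (4/3)*u1 0*u1 1*u2 0*u2 1 + (-2/9)*u1 0 ^ 2*u2 2 + (2/9)*u1 0 ^ 2*u2 1 + (2/3)*u1 0 ^ 2*u2 1*u2 2 + (-2/3)*u1 0 ^ 2*u2 1 ^ 2) * u3 2 + ((1/9)*u2 2 ^ 2 + (-2/9)*u2 1*u2 2 + (1/9)*u2 1 ^ 2 + (-2/9)*u1 2*u2 2 + (2/9)*u1 2*u2 1 + (2/3)*u1 2*u2 1*u2 2 + (-2/3)*u1 2*u2 1 ^ 2 + (1/9)*u1 2 ^ 2 + (-2/3)*u1 2 ^ 2*u2 1 + (1)*u1 2 ^ 2*u2 1 ^ 2 + (2/9)*u1 1*u2 2 + (-2/3)*u1 1*u2 2 ^ 2 + (-2/9)*u1 1*u2 1 + (2/3)*u1 1*u2 1*u2 2 + (-2/9)*u1 1*u1 2 + (2/3)*u1 1*u1 2*u2 2 + (2/3)*u1 1*u1 2*u2 1 + (-2)*u1 1*u1 2*u2 1*u2 2 + (1/9)*u1 1 ^ 2 + (-2/3)*u1 1 ^ 2*u2 2 + (1)*u1 1 ^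 2*u2 2 ^ 2) * u3 0 ^ 2 + ((1/9)*u2 2 ^ 2 + (-2/9)*u2 0*u2 2 + (1/9)*u2 0 ^ 2 + (-2/9)*u1 2*u2 2 + (2/9)*u1 2*u2 0 + (2/3)*u1 2*u2 0*u2 2 + (-2/3)*u1 2*u2 0 ^ 2 + (1/9)*u1 2 ^ 2 + (-2/3)*u1 2 ^ 2*u2 0 + (1)*u1 2 ^ 2*u2 0 ^ 2 + (2/9)*u1 0*u2 2 + (-2/3)*u1 0*u2 2 ^ 2 + (-2/9)*u1 0*u2 0 + (2/3)*u1 0*u2 0*u2 2 + (-2/9)*u1 0*u1 2 + (2/3)*u1 0*u1 2*u2 2 + (2/3)*u1 0*u1 2*u2 0 + (-2)*u1 0*u1 2*u2 0*u2 2 + (1/9)*u1 0 ^ 2 + (-2/3)*u1 0 ^ 2*u2 2 + (1)*u1 0 ^ 2*u2 2 ^ 2) * u3 1 ^ 2 + ((1/9)*u2 1 ^ 2 + (-2/9)*u2 0*u2 1 + (1/9)*u2 0 ^ 2 + (-2/9)*u1 1*u2 1 + (2/9)*u1 1*u2 0 + (2/3)*u1 1*u2 0*u2 1 + (-2/3)*u1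 1*u2 0 ^ 2 + (1/9)*u1 1 ^ 2 + (-2/3)*u1 1 ^ 2*u2 0 + (1)*u1 1 ^ 2*u2 0 ^ 2 + (2/9)*u1 0*u2 1 + (-2/3)*u1 0*u2 1 ^ 2 + (-2/9)*u1 0*u2 0 + (2/3)*u1 0*u2 0*u2 1 + (-2/9)*u1 0*u1 1 + (2/3)*u1 0*u1 1*u2 1 + (2/3)*u1 0*u1 1*u2 0 + (-2)*u1 0*u1 1*u2 0*u2 1 + (1/9)*u1 0 ^ 2 + (-2/3)*u1 0 ^ 2*u2 1 + (1)*u1 0 ^ 2*u2 1 ^ 2) * u3 2 ^ 2 + ((-2/9)*u2 2 ^ 2 + (2/9)*u2 1*u2 2 + (2/9)*u2 0*u2 2 + (-2/9)*u2 0*u2 1 + (4/9)*u1 2*u2 2 + (-2/9)*u1 2*u2 1 + (-2/3)*u1 2*u2 1*u2 2 + (-2/9)*u1 2*u2 0 + (-2/3)*u1 2*u2 0*u2 2 + (4/3)*u1 2*u2 0*u2 1 + (-2/9)*u1 2 ^ 2 + (2/3)*u1 2 ^ 2*u2 1 + (2/3)*u1 2 ^ 2*u2 0 + (-2)*u1 2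 ^ 2*u2 0*u2 1 + (-2/9)*u1 1*u2 2 + (2/3)*u1 1*u2 2 ^ 2 + (2/9)*u1 1*u2 0 + (-2/3)*u1 1*u2 0*u2 2 + (2/9)*u1 1*u1 2 + (-2/3)*u1 1*u1 2*u2 2 + (-2/3)*u1 1*u1 2*u2 0 + (2)*u1 1*u1 2*u2 0*u2 2 + (-2/9)*u1 0*u2 2 + (2/3)*u1 0*u2 2 ^ 2 + (2/9)*u1 0*u2 1 + (-2/3)*u1 0*u2 1*u2 2 + (2/9)*u1 0*u1 2 + (-2/3)*u1 0*u1 2*u2 2 + (-2/3)*u1 0*u1 2*u2 1 + (2)*u1 0*u1 2*u2 1*u2 2 + (-2/9)*u1 0*u1 1 + (4/3)*u1 0*u1 1*u2 2 + (-2)*u1 0*u1 1*u2 2 ^ 2) * (u3 0 * u3 1) + ((2/9)*u2 1*u2 2 + (-2/9)*u2 1 ^ 2 + (-2/9)*u2 0*u2 2 + (2/9)*u2 0*u2 1 + (-2/9)*u1 2*u2 1 + (2/3)*u1 2*u2 1 ^ 2 + (2/9)*u1 2*u2 0 + (-2/3)*u1 2*u2 0*u2 1 + (-2/9)*u1 1*u2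 2 + (4/9)*u1 1*u2 1 + (-2/3)*u1 1*u2 1*u2 2 + (-2/9)*u1 1*u2 0 + (4/3)*u1 1*u2 0*u2 2 + (-2/3)*u1 1*u2 0*u2 1 + (2/9)*u1 1*u1 2 + (-2/3)*u1 1*u1 2*u2 1 + (-2/3)*u1 1*u1 2*u2 0 + (2)*u1 1*u1 2*u2 0*u2 1 + (-2/9)*u1 1 ^ 2 + (2/3)*u1 1 ^ 2*u2 2 + (2/3)*u1 1 ^ 2*u2 0 + (-2)*u1 1 ^ 2*u2 0*u2 2 + (2/9)*u1 0*u2 2 + (-2/9)*u1 0*u2 1 + (-2/3)*u1 0*u2 1*u2 2 + (2/3)*u1 0*u2 1 ^ 2 + (-2/9)*u1 0*u1 2 + (4/3)*u1 0*u1 2*u2 1 + (-2)*u1 0*u1 2*u2 1 ^ 2 + (2/9)*u1 0*u1 1 + (-2/3)*u1 0*u1 1*u2 2 + (-2/3)*u1 0*u1 1*u2 1 + (2)*u1 0*u1 1*u2 1*u2 2) * (u3 0 * u3 2) + ((-2/9)*u2 1*u2 2 + (2/9)*u2 0*u2 2 + (2/9)*u2 0*u2 1 + (-2/9)*u2 0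 ^ 2 + (2/9)*u1 2*u2 1 + (-2/9)*u1 2*u2 0 + (-2/3)*u1 2*u2 0*u2 1 + (2/3)*u1 2*u2 0 ^ 2 + (2/9)*u1 1*u2 2 + (-2/9)*u1 1*u2 0 + (-2/3)*u1 1*u2 0*u2 2 + (2/3)*u1 1*u2 0 ^ 2 + (-2/9)*u1 1*u1 2 + (4/3)*u1 1*u1 2*u2 0 + (-2)*u1 1*u1 2*u2 0 ^ 2 + (-2/9)*u1 0*u2 2 + (-2/9)*u1 0*u2 1 + (4/3)*u1 0*u2 1*u2 2 + (4/9)*u1 0*u2 0 + (-2/3)*u1 0*u2 0*u2 2 + (-2/3)*u1 0*u2 0*u2 1 + (2/9)*u1 0*u1 2 + (-2/3)*u1 0*u1 2*u2 1 + (-2/3)*u1 0*u1 2*u2 0 + (2)*u1 0*u1 2*u2 0*u2 1 + (2/9)*u1 0*u1 1 + (-2/3)*u1 0*u1 1*u2 2 + (-2/3)*u1 0*u1 1*u2 0 + (2)*u1 0*u1 1*u2 0*u2 2 + (-2/9)*u1 0 ^ 2 + (2/3)*u1 0 ^ 2*u2 2 + (2/3)*u1 0 ^ 2*u2 1 + (-2)*u1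 0 ^ 2*u2 1*u2 2) * (u3 1 * u3 2)) := by
    funext u3
    simp only [det3, Pi.sub_apply, c0v]
    ring
  show (∫ u3 in S3, (fun u3 : Fin 3 → ℝ => det3 (u2 - u1) (u3 - u1) (c0v - u1) ^ 2) u3) = _
  rw [e, master]
  ring

lemma stage2 (u1 : Fin 3 → ℝ) :
    (∫ u2 in S3, (((1/540)*u1 2 ^ 2 + (-1/540)*u1 1*u1 2 + (1/540)*u1 1 ^ 2 + (-1/540)*u1 0*u1 2 + (-1/540)*u1 0*u1 1 + (1/540)*u1 0 ^ 2) + ((1/540)*u1 2 + (-1/180)*u1 2 ^ 2 + (1/540)*u1 1 + (-1/180)*u1 1 ^ 2 + (-1/270)*u1 0 + (1/180)*u1 0*u1 2 + (1/180)*u1 0*u1 1) * u2 0 + ((1/540)*u1 2 + (-1/180)*u1 2 ^ 2 + (-1/270)*u1 1 + (1/180)*u1 1*u1 2 + (1/540)*u1 0 + (1/180)*u1 0*u1 1 + (-1/180)*u1 0 ^ 2) * u2 1 + ((-1/270)*u1 2 + (1/540)*u1 1 + (1/180)*u1 1*u1 2 + (-1/180)*u1 1 ^ 2 + (1/540)*u1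 0 + (1/180)*u1 0*u1 2 + (-1/180)*u1 0 ^ 2) * u2 2 + ((1/540) + (-1/180)*u1 2 + (1/135)*u1 2 ^ 2 + (-1/180)*u1 1 + (1/540)*u1 1*u1 2 + (1/135)*u1 1 ^ 2) * u2 0 ^ 2 + ((1/540) + (-1/180)*u1 2 + (1/135)*u1 2 ^ 2 + (-1/180)*u1 0 + (1/540)*u1 0*u1 2 + (1/135)*u1 0 ^ 2) * u2 1 ^ 2 + ((1/540) + (-1/180)*u1 1 + (1/135)*u1 1 ^ 2 + (-1/180)*u1 0 + (1/540)*u1 0*u1 1 + (1/135)*u1 0 ^ 2) * u2 2 ^ 2 + ((-1/540) + (1/540)*u1 2 ^ 2 + (1/180)*u1 1 + (-1/540)*u1 1*u1 2 + (1/180)*u1 0 + (-1/540)*u1 0*u1 2 + (-2/135)*u1 0*u1 1) * (u2 0 * u2 1) + ((-1/540) + (1/180)*u1 2 + (-1/540)*u1 1*u1 2 + (1/540)*u1 1 ^ 2 + (1/180)*u1 0 + (-2/135)*u1 0*u1 2 + (-1/540)*u1 0*u1 1) * (u2 0 * u2 2) + ((-1/540) + (1/180)*u1 2 + (1/180)*u1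 1 + (-2/135)*u1 1*u1 2 + (-1/540)*u1 0*u1 2 + (-1/540)*u1 0*u1 1 + (1/540)*u1 0 ^ 2) * (u2 1 * u2 2) : ℝ)) = ((1/21600)) + ((-1/10800)) * u1 0 + ((-1/10800)) * u1 1 + ((-1/10800)) * u1 2 + ((7/64800)) * u1 0 ^ 2 + ((7/64800)) * u1 1 ^ 2 + ((7/64800)) * u1 2 ^ 2 + ((1/32400)) * (u1 0 * u1 1) + ((1/32400)) * (u1 0 * u1 2) + ((1/32400)) * (u1 1 * u1 2) := by
  rw [master]
  ring

lemma stage3 : (∫ u1 in S3, (((1/21600)) + ((-1/10800)) * u1 0 + ((-1/10800)) * u1 1 + ((-1/10800)) * u1 2 + ((7/64800)) * u1 0 ^ 2 + ((7/64800)) * u1 1 ^ 2 + ((7/64800)) * u1 2 ^ 2 + ((1/32400)) * (u1 0 * u1 1) + ((1/32400)) * (u1 0 * u1 2) + ((1/32400)) * (u1 1 * u1 2) : ℝ)) = 1 / 432000 := by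
  rw [master]
  norm_num


theorem moment_2 (v : Fin 4 → (Fin 3 → ℝ))
    (hv : AffineIndependent ℝ v) (T : Set (Fin 3 → ℝ))
    (hT : T = convexHull ℝ (Set.range v)) (hvol : volume T = 1)
    (c : Fin 3 → ℝ) (hc : c = (3:ℝ)⁻¹ • (v 0 + v 1 + v 2)) :
    (∫ x₁ in T, ∫ x₂ in T, ∫ x₃ in T,
        (volume (convexHull ℝ ({x₁, x₂, x₃, c} : Set (Fin 3 → ℝ)))).toReal ^ 2)
      = 1 / 2000 := by
  have hrange : Set.range v = {v 0, v 1, v 2, v 3} := range_fin4 v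
  have hsetT : T = convexHull ℝ ({v 3, v 0, v 1, v 2} : Set (Fin 3 → ℝ)) := by
    rw [hT, hrange]
    congr 1
    ext z
    simp only [Set.mem_insert_iff, Set.mem_singleton_iff]
    tauto
  set dA := det3 (v 0 - v 3) (v 1 - v 3) (v 2 - v 3) with hdA
  have hvolT : volume T = ENNReal.ofReal (|dA| / 6) := by rw [hsetT, sim_vol]
  have habs : |dA| = 6 := by
    rw [hvolT] at hvol
    have h6 := ENNReal.ofReal_eq_one.mp hvol
    linarith
  have hdA_ne : dA ≠ 0 := by
    intro h0
    rw [h0, abs_zero] at habs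
    norm_num at habs
  set M : Matrix (Fin 3) (Fin 3) ℝ :=
    Matrix.of fun i j => (![v 0 - v 3, v 1 - v 3, v 2 - v 3] j) i with hM
  have hMdet : M.det = dA := by
    rw [Matrix.det_fin_three]
    simp only [hM, Matrix.of_apply, Matrix.cons_val', Matrix.cons_val_zero, Matrix.cons_val_one,
      Matrix.head_cons, Matrix.empty_val', Matrix.cons_val_fin_one, Matrix.head_fin_const,
      Matrix.cons_val_two, Matrix.tail_cons]
    rw [hdA, det3]
    ring
  have hMunit : IsUnit M.det := by
    rw [hMdet]
    exact isUnit_iff_ne_zero.mpr hdA_ne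
  letI : Invertible M := M.invertibleOfIsUnitDet hMunit
  set B := Matrix.toLin' M with hB
  have hdetB : LinearMap.det B = dA := by rw [hB, LinearMap.det_toLin', hMdet]
  have hdetB_ne : LinearMap.det B ≠ 0 := by rw [hdetB]; exact hdA_ne
  set φ : (Fin 3 → ℝ) ≃ᵐ (Fin 3 → ℝ) :=
    (((Matrix.toLinearEquiv' M ‹Invertible M›).toContinuousLinearEquiv.toHomeomorph).trans
      (Homeomorph.addLeft (v 3))).toMeasurableEquiv with hφ
  have hφapp : ∀ u, φ u = v 3 + B u := fun u => rfl
  have hφfun : ⇑φ = fun u => v 3 + B u := funext hφapp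
  have hBsp : ∀ j : Fin 3, B (sp j) = ![v 0 - v 3, v 1 - v 3, v 2 - v 3] j := by
    intro j
    funext i
    show (Matrix.toLin' M) (Pi.single j 1) i = _
    rw [Matrix.toLin'_apply, Matrix.mulVec_single]
    simp [hM]
  have hTimg : T = ⇑φ '' S3 := by
    rw [hφfun, ← hull01, aff_image_convexHull, Set.image_insert_eq, Set.image_insert_eq,
      Set.image_insert_eq, Set.image_singleton]
    have e0 : v 3 + B 0 = v 3 := by rw [map_zero, add_zero]
    have e1 : v 3 + B (sp 0) = v 0 := by rw [hBsp 0]; funext i; simp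
    have e2 : v 3 + B (sp 1) = v 1 := by rw [hBsp 1]; funext i; simp
    have e3 : v 3 + B (sp 2) = v 2 := by rw [hBsp 2]; funext i; simp
    rw [e0, e1, e2, e3, hsetT]
  have hmap : Measure.map (⇑φ) volume = ENNReal.ofReal (1 / 6) • volume := by
    rw [hφfun]
    have hcomp : (fun u => v 3 + B u) = (fun x => v 3 + x) ∘ (⇑B) := rfl
    rw [hcomp, ← Measure.map_map (show Measurable fun x : Fin 3 → ℝ => v 3 + x from
      measurable_id.const_add (v 3))
      B.continuous_of_finiteDimensional.measurable,
      Measure.map_linearMap_addHaar_eq_smul_addHaar volume hdetB_ne,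
      Measure.map_smul, Measure.IsAddLeftInvariant.map_add_left_eq_self (v 3)]
    congr 1
    rw [hdetB, abs_inv, habs]
    norm_num
  have key : ∀ F : (Fin 3 → ℝ) → ℝ, (∫ x in T, F x) = 6 * ∫ u in S3, F (φ u) := by
    intro F
    have h1 : (volume : Measure (Fin 3 → ℝ)) = ENNReal.ofReal 6 • Measure.map (⇑φ) volume := by
      rw [hmap, smul_smul, ← ENNReal.ofReal_mul (by norm_num : (0:ℝ) ≤ 6)]
      norm_num
    calc ∫ x in T, F x
        = ∫ x in T, F x ∂(ENNReal.ofReal 6 • Measure.map (⇑φ) volume) :=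
          congrArg (fun μ : Measure (Fin 3 → ℝ) => ∫ x in T, F x ∂μ) h1
      _ = 6 * ∫ x in T, F x ∂(Measure.map (⇑φ) volume) := by
          rw [Measure.restrict_smul, integral_smul_measure,
            ENNReal.toReal_ofReal (by norm_num : (0:ℝ) ≤ 6), smul_eq_mul]
      _ = 6 * ∫ u in ⇑φ ⁻¹' T, F (φ u) := by rw [setIntegral_map_equiv]
      _ = 6 * ∫ u in S3, F (φ u) := by rw [hTimg, Set.preimage_image_eq _ φ.injective]
  have hc0 : φ c0v = c := by
    rw [hφapp]
    funext i
    rw [hc]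
    show v 3 i + B c0v i = ((3:ℝ)⁻¹ • (v 0 + v 1 + v 2)) i
    rw [hB, Matrix.toLin'_apply]
    show v 3 i + Matrix.mulVec M c0v i = _
    simp only [Matrix.mulVec, dotProduct, Fin.sum_univ_three, hM, Matrix.of_apply,
      Matrix.cons_val', Matrix.cons_val_zero, Matrix.cons_val_one, Matrix.head_cons,
      Matrix.empty_val', Matrix.cons_val_fin_one, Matrix.head_fin_const,
      Matrix.cons_val_two, Matrix.tail_cons, c0v, Pi.sub_apply, Pi.smul_apply, Pi.add_apply,
      smul_eq_mul]
    ring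
  have hInner : ∀ u1 u2 u3 : Fin 3 → ℝ,
      (volume (convexHull ℝ ({φ u1, φ u2, φ u3, c} : Set (Fin 3 → ℝ)))).toReal ^ 2
        = det3 (u2 - u1) (u3 - u1) (c0v - u1) ^ 2 := by
    intro u1 u2 u3
    have himg : ({φ u1, φ u2, φ u3, c} : Set (Fin 3 → ℝ)) = ⇑φ '' {u1, u2, u3, c0v} := by
      rw [Set.image_insert_eq, Set.image_insert_eq, Set.image_insert_eq, Set.image_singleton,
        hc0]
    rw [himg, hφfun, ← aff_image_convexHull, vol_aff, sim_vol, hdetB, habs,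
      ← ENNReal.ofReal_mul (by norm_num : (0:ℝ) ≤ 6)]
    rw [show (6:ℝ) * (|det3 (u2 - u1) (u3 - u1) (c0v - u1)| / 6)
        = |det3 (u2 - u1) (u3 - u1) (c0v - u1)| by ring]
    rw [ENNReal.toReal_ofReal (abs_nonneg _), sq_abs]
  rw [key]
  simp only [key]
  simp only [hInner]
  simp only [stage1]
  simp only [MeasureTheory.integral_const_mul]
  simp only [stage2]
  simp only [stage3]
  norm_num

end
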